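/- Let Δ = Δ_0 + Δ_1 + ⋯ + Δ_k be a Minkowski sum decomposition of a reflexive polytope Δ ⊂ ℝ^d into lattice polytopes, and define ∇̂_0 = Conv({u − Σ_{i=1}^k min⟨Δ_i,u⟩ e_i* : u ∈ Δ*} ∪ {e_1*, …, e_k*}) ⊂ ℝ^d ⊕ ℝ^k and ∇̂_i = ∇̂_0 − e_i* for i = 1,…,k. Then the set of lattice points of ∇̂_0 equals {n − Σ_{i=1}^k min⟨Δ_i,n⟩ e_i* : n ∈ Δ* ∩ ℤ^d} ∪ {e_1*, …, e_k*}, so l(∇̂_0) = l(Δ*) + k; moreover l(∇̂_0 ⊎ ∇̂_1 ⊎ ⋯ ⊎ ∇̂_k) = (k+1)·l(Δ*) + k². -/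

import Mathlib

open scoped Pointwise
open Set

noncomputable section

/-- The standard pairing on `ℝ^n`. -/
def pairing {n : ℕ} (x y : Fin n → ℝ) : ℝ := ∑ i, x i * y i

/-- A point of `ℝ^n` lying in the lattice `ℤ^n`. -/
def IsLatticePt {n : ℕ} (x : Fin n → ℝ) : Prop := ∀ i, ∃ z : ℤ, x i = (z : ℝ)

/-- A lattice polytope: the convex hull of finitely many lattice points. -/
def IsLatticePolytope {n : ℕ} (P : Set (Fin n → ℝ)) : Prop :=
  ∃ S : Set (Fin n → ℝ), S.Finite ∧ (∀ x ∈ S, IsLatticePt x) ∧ P = convexHull ℝ S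

/-- The dual polytope `P* = {y | ⟨x,y⟩ ≥ -1 ∀ x ∈ P}`. -/
def polarDual {n : ℕ} (P : Set (Fin n → ℝ)) : Set (Fin n → ℝ) :=
  {y | ∀ x ∈ P, -1 ≤ pairing x y}

/-- A reflexive polytope. -/
def IsReflexive {n : ℕ} (P : Set (Fin n → ℝ)) : Prop :=
  IsLatticePolytope P ∧ (0 : Fin n → ℝ) ∈ interior P ∧ IsLatticePolytope (polarDual P)

/-- `min⟨P, u⟩ = min_{x ∈ P} ⟨x, u⟩`. -/
def minPair {n : ℕ} (P : Set (Fin n → ℝ)) (u : Fin n → ℝ) : ℝ :=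
  sInf ((fun x => pairing x u) '' P)

/-- The real vector space `ℝ^d ⊕ ℝ^k`. -/
abbrev Vdk (d k : ℕ) := (Fin d → ℝ) × (Fin k → ℝ)

/-- The pairing on `ℝ^d ⊕ ℝ^k` (sum of the two standard pairings). -/
def pairingV {d k : ℕ} (x y : Vdk d k) : ℝ := pairing x.1 y.1 + pairing x.2 y.2

def IsLatticePtV {d k : ℕ} (x : Vdk d k) : Prop := IsLatticePt x.1 ∧ IsLatticePt x.2

def IsLatticePolytopeV {d k : ℕ} (P : Set (Vdk d k)) : Prop :=
  ∃ S : Set (Vdk d k), S.Finite ∧ (∀ x ∈ S, IsLatticePtV x) ∧ P = convexHull ℝ S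

def polarDualV {d k : ℕ} (P : Set (Vdk d k)) : Set (Vdk d k) :=
  {y | ∀ x ∈ P, -1 ≤ pairingV x y}

def IsReflexiveV {d k : ℕ} (P : Set (Vdk d k)) : Prop :=
  IsLatticePolytopeV P ∧ (0 : Vdk d k) ∈ interior P ∧ IsLatticePolytopeV (polarDualV P)

/-- The Cayley cone `σ̄ = {(t₀Δ₀ + ⋯ + t_kΔ_k, t₀, …, t_k) : tᵢ ≥ 0} ⊆ ℝ^d ⊕ ℝ^{k+1}`. -/
def cayleyCone {d k : ℕ} (Δ : Fin (k+1) → Set (Fin d → ℝ)) : Set (Vdk d (k+1)) :=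
  {p | (∀ i, 0 ≤ p.2 i) ∧ p.1 ∈ ∑ i, p.2 i • Δ i}

/-- The dual cone of a cone in `ℝ^d ⊕ ℝ^k`. -/
def dualConeV {d k : ℕ} (σ : Set (Vdk d k)) : Set (Vdk d k) :=
  {y | ∀ x ∈ σ, 0 ≤ pairingV x y}

-- pairing lemmas
lemma pairing_add_left {n : ℕ} (x y u : Fin n → ℝ) :
    pairing (x + y) u = pairing x u + pairing y u := by
  simp [pairing, add_mul, Finset.sum_add_distrib]

lemma pairing_smul_left {n : ℕ} (c : ℝ) (x u : Fin n → ℝ) :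
    pairing (c • x) u = c * pairing x u := by
  simp [pairing, Finset.mul_sum, mul_assoc]

lemma pairing_add_right {n : ℕ} (x u v : Fin n → ℝ) :
    pairing x (u + v) = pairing x u + pairing x v := by
  simp [pairing, mul_add, Finset.sum_add_distrib]

lemma pairing_smul_right {n : ℕ} (c : ℝ) (x u : Fin n → ℝ) :
    pairing x (c • u) = c * pairing x u := by
  simp only [pairing, Pi.smul_apply, smul_eq_mul]
  rw [Finset.mul_sum]
  exact Finset.sum_congr rfl fun i _ => by ring

lemma pairing_zero_left {n : ℕ} (u : Fin n → ℝ) : pairing 0 u = 0 := by simp [pairing]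
lemma pairing_zero_right {n : ℕ} (x : Fin n → ℝ) : pairing x 0 = 0 := by simp [pairing]

lemma pairing_comm {n : ℕ} (x y : Fin n → ℝ) : pairing x y = pairing y x := by
  simp [pairing, mul_comm]

lemma pairing_self_pos {n : ℕ} {x : Fin n → ℝ} (hx : x ≠ 0) : 0 < pairing x x := by
  have h : ∃ i, x i ≠ 0 := by
    by_contra h; push_neg at h; exact hx (funext h)
  obtain ⟨i, hi⟩ := h
  have : (0:ℝ) < x i * x i := mul_self_pos.2 hi
  have hle : ∀ j ∈ Finset.univ, (0:ℝ) ≤ x j * x j := fun j _ => mul_self_nonneg _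
  exact Finset.sum_pos' hle ⟨i, Finset.mem_univ i, this⟩

lemma IsLatticePt.pairing_int {n : ℕ} {x y : Fin n → ℝ} (hx : IsLatticePt x)
    (hy : IsLatticePt y) : ∃ z : ℤ, pairing x y = (z : ℝ) := by
  refine ⟨∑ i, Classical.choose (hx i) * Classical.choose (hy i), ?_⟩
  rw [pairing]
  push_cast
  refine Finset.sum_congr rfl fun i _ => ?_
  rw [← Classical.choose_spec (hx i), ← Classical.choose_spec (hy i)]

lemma isLatticePt_zero {n : ℕ} : IsLatticePt (0 : Fin n → ℝ) := fun i => ⟨0, by simp⟩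

-- convexity of halfspaces
lemma convex_le_pairing {n : ℕ} (u : Fin n → ℝ) (c : ℝ) :
    Convex ℝ {y : Fin n → ℝ | c ≤ pairing y u} := by
  intro p hp q hq a b ha hb hab
  simp only [mem_setOf_eq] at *
  rw [pairing_add_left, pairing_smul_left, pairing_smul_left]
  have h1 : a * c ≤ a * pairing p u := mul_le_mul_of_nonneg_left hp ha
  have h2 : b * c ≤ b * pairing q u := mul_le_mul_of_nonneg_left hq hb
  have h3 : a * c + b * c = c := by rw [← add_mul, hab, one_mul]
  linarith

lemma convex_pairing_le {n : ℕ} (u : Fin n → ℝ) (c : ℝ) :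
    Convex ℝ {y : Fin n → ℝ | pairing y u ≤ c} := by
  intro p hp q hq a b ha hb hab
  simp only [mem_setOf_eq] at *
  rw [pairing_add_left, pairing_smul_left, pairing_smul_left]
  have h1 : a * pairing p u ≤ a * c := mul_le_mul_of_nonneg_left hp ha
  have h2 : b * pairing q u ≤ b * c := mul_le_mul_of_nonneg_left hq hb
  have h3 : a * c + b * c = c := by rw [← add_mul, hab, one_mul]
  linarith

lemma convex_polarDual {n : ℕ} (P : Set (Fin n → ℝ)) : Convex ℝ (polarDual P) := by
  intro p hp q hq a b ha hb hab
  intro x hx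
  have h1 := hp x hx
  have h2 := hq x hx
  rw [pairing_add_right, pairing_smul_right, pairing_smul_right]
  nlinarith

lemma zero_mem_polarDual {n : ℕ} (P : Set (Fin n → ℝ)) : (0 : Fin n → ℝ) ∈ polarDual P :=
  fun x _ => by rw [pairing_zero_right]; norm_num

-- Part B : minPair

def AttainsMin {n : ℕ} (P : Set (Fin n → ℝ)) (u x : Fin n → ℝ) : Prop :=
  x ∈ P ∧ ∀ y ∈ P, pairing x u ≤ pairing y u

lemma AttainsMin.minPair_eq {n : ℕ} {P : Set (Fin n → ℝ)} {u x : Fin n → ℝ}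
    (h : AttainsMin P u x) : minPair P u = pairing x u := by
  obtain ⟨hx, hmin⟩ := h
  apply le_antisymm
  · exact csInf_le ⟨pairing x u, by rintro _ ⟨y, hy, rfl⟩; exact hmin y hy⟩ ⟨x, hx, rfl⟩
  · exact le_csInf ⟨_, ⟨x, hx, rfl⟩⟩ (by rintro _ ⟨y, hy, rfl⟩; exact hmin y hy)

lemma AttainsMin.minPair_le {n : ℕ} {P : Set (Fin n → ℝ)} {u x : Fin n → ℝ}
    (h : AttainsMin P u x) {y : Fin n → ℝ} (hy : y ∈ P) : minPair P u ≤ pairing y u := by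
  rw [h.minPair_eq]; exact h.2 y hy

lemma IsLatticePolytope.exists_min {n : ℕ} {P : Set (Fin n → ℝ)} (hP : IsLatticePolytope P)
    (hne : P.Nonempty) (u : Fin n → ℝ) :
    ∃ x, IsLatticePt x ∧ AttainsMin P u x := by
  obtain ⟨S, hSfin, hSlat, rfl⟩ := hP
  have hSne : S.Nonempty := by
    rcases S.eq_empty_or_nonempty with h | h
    · rw [h] at hne; simp [convexHull_empty] at hne
    · exact h
  obtain ⟨x, hxS, hxmin⟩ := hSfin.toFinset.exists_min_image (fun y => pairing y u)
    (by rwa [Set.Finite.toFinset_nonempty])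
  rw [hSfin.mem_toFinset] at hxS
  have hsub : convexHull ℝ S ⊆ {y | pairing x u ≤ pairing y u} :=
    convexHull_min (fun y hy => hxmin y (by rwa [hSfin.mem_toFinset])) (convex_le_pairing u _)
  exact ⟨x, hSlat x hxS, subset_convexHull ℝ S hxS, fun y hy => hsub hy⟩

lemma AttainsMin.add {n : ℕ} {P R : Set (Fin n → ℝ)} {u x y : Fin n → ℝ}
    (hx : AttainsMin P u x) (hy : AttainsMin R u y) : AttainsMin (P + R) u (x + y) := by
  constructor
  · exact Set.add_mem_add hx.1 hy.1
  · intro z hz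
    obtain ⟨p, hp, q, hq, rfl⟩ := Set.mem_add.1 hz
    rw [pairing_add_left, pairing_add_left]
    exact add_le_add (hx.2 p hp) (hy.2 q hq)

lemma attainsMin_sum {n : ℕ} {ι : Type*} (s : Finset ι) (Δ : ι → Set (Fin n → ℝ))
    (u : Fin n → ℝ) (x : ι → Fin n → ℝ) (h : ∀ i ∈ s, AttainsMin (Δ i) u (x i)) :
    AttainsMin (∑ i ∈ s, Δ i) u (∑ i ∈ s, x i) := by
  induction s using Finset.cons_induction with
  | empty =>
      simp only [Finset.sum_empty]
      exact ⟨by simp [Set.mem_zero], by rintro y hy; rw [Set.mem_zero] at hy; rw [hy]⟩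
  | cons a s ha ih =>
      rw [Finset.sum_cons, Finset.sum_cons]
      exact (h a (Finset.mem_cons_self a s)).add
        (ih fun i hi => h i (Finset.mem_cons_of_mem hi))

lemma pairing_sum_left {n : ℕ} {ι : Type*} (s : Finset ι) (x : ι → Fin n → ℝ)
    (u : Fin n → ℝ) : pairing (∑ i ∈ s, x i) u = ∑ i ∈ s, pairing (x i) u := by
  induction s using Finset.cons_induction with
  | empty => simp [pairing_zero_left]
  | cons a s ha ih => rw [Finset.sum_cons, Finset.sum_cons, pairing_add_left, ih]

lemma minPair_sum {n : ℕ} {ι : Type*} (s : Finset ι) (Δ : ι → Set (Fin n → ℝ))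
    (u : Fin n → ℝ) (x : ι → Fin n → ℝ) (h : ∀ i ∈ s, AttainsMin (Δ i) u (x i)) :
    minPair (∑ i ∈ s, Δ i) u = ∑ i ∈ s, minPair (Δ i) u := by
  rw [(attainsMin_sum s Δ u x h).minPair_eq, pairing_sum_left]
  exact Finset.sum_congr rfl fun i hi => ((h i hi).minPair_eq).symm

lemma nonempty_of_mem_sum {n : ℕ} {ι : Type*} {s : Finset ι} {Δ : ι → Set (Fin n → ℝ)}
    {x : Fin n → ℝ} (hx : x ∈ ∑ i ∈ s, Δ i) : ∀ i ∈ s, (Δ i).Nonempty := by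
  induction s using Finset.cons_induction generalizing x with
  | empty => simp
  | cons a s ha ih =>
      rw [Finset.sum_cons] at hx
      obtain ⟨p, hp, q, hq, rfl⟩ := Set.mem_add.1 hx
      intro i hi
      rcases Finset.mem_cons.1 hi with rfl | hi'
      · exact ⟨p, hp⟩
      · exact ih hq i hi'

-- Part C : derived minPair lemmas

lemma minPair_int {n : ℕ} {P : Set (Fin n → ℝ)} (hP : IsLatticePolytope P) (hne : P.Nonempty)
    {u : Fin n → ℝ} (hu : IsLatticePt u) : ∃ z : ℤ, minPair P u = (z : ℝ) := by
  obtain ⟨x, hxl, hxa⟩ := hP.exists_min hne u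
  rw [hxa.minPair_eq]; exact hxl.pairing_int hu

lemma minPair_zero_right {n : ℕ} {P : Set (Fin n → ℝ)} (hP : IsLatticePolytope P)
    (hne : P.Nonempty) : minPair P 0 = 0 := by
  obtain ⟨x, _, hxa⟩ := hP.exists_min hne 0
  rw [hxa.minPair_eq, pairing_zero_right]

lemma minPair_combo {n : ℕ} {P : Set (Fin n → ℝ)} (hP : IsLatticePolytope P) (hne : P.Nonempty)
    {u v : Fin n → ℝ} {a b : ℝ} (ha : 0 ≤ a) (hb : 0 ≤ b) :
    a * minPair P u + b * minPair P v ≤ minPair P (a • u + b • v) := by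
  obtain ⟨x, _, hxa⟩ := hP.exists_min hne (a • u + b • v)
  obtain ⟨y, _, hya⟩ := hP.exists_min hne u
  obtain ⟨z, _, hza⟩ := hP.exists_min hne v
  rw [hxa.minPair_eq, pairing_add_right, pairing_smul_right, pairing_smul_right]
  have h1 : minPair P u ≤ pairing x u := hya.minPair_le hxa.1
  have h2 : minPair P v ≤ pairing x v := hza.minPair_le hxa.1
  have h3 : a * minPair P u ≤ a * pairing x u := mul_le_mul_of_nonneg_left h1 ha
  have h4 : b * minPair P v ≤ b * pairing x v := mul_le_mul_of_nonneg_left h2 hb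
  linarith

lemma minPair_le_zero {n : ℕ} {P : Set (Fin n → ℝ)} (hP : IsLatticePolytope P)
    (h0 : (0 : Fin n → ℝ) ∈ P) (u : Fin n → ℝ) : minPair P u ≤ 0 := by
  obtain ⟨x, _, hxa⟩ := hP.exists_min ⟨0, h0⟩ u
  have := hxa.minPair_le h0
  rwa [pairing_zero_left] at this

lemma minPair_neg_of_ne_zero {n : ℕ} {P : Set (Fin n → ℝ)} (hP : IsLatticePolytope P)
    (h0 : (0 : Fin n → ℝ) ∈ interior P) {u : Fin n → ℝ} (hu : u ≠ 0) : minPair P u < 0 := by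
  have hne : P.Nonempty := ⟨0, interior_subset h0⟩
  have hcont : Continuous (fun c : ℝ => c • (-u)) := continuous_id.smul continuous_const
  have hmem : (fun c : ℝ => c • (-u)) ⁻¹' interior P ∈ nhds (0 : ℝ) := by
    apply hcont.continuousAt.preimage_mem_nhds
    show interior P ∈ nhds ((0:ℝ) • -u)
    rw [zero_smul]
    exact isOpen_interior.mem_nhds h0
  obtain ⟨δ, hδ, hball⟩ := Metric.mem_nhds_iff.1 hmem
  have hcmem : (δ/2) • (-u) ∈ P := by
    apply interior_subset
    apply hball
    rw [Metric.mem_ball, Real.dist_eq, sub_zero, abs_of_pos (by positivity)]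
    linarith
  obtain ⟨x, _, hxa⟩ := hP.exists_min hne u
  have hle : minPair P u ≤ pairing ((δ/2) • (-u)) u := hxa.minPair_le hcmem
  have heq : pairing ((δ/2) • (-u)) u = -(δ/2 * pairing u u) := by
    rw [pairing_smul_left]
    have : pairing (-u) u = -pairing u u := by simp [pairing, neg_mul]
    rw [this]; ring
  have hp := pairing_self_pos hu
  rw [heq] at hle
  nlinarith

lemma neg_one_le_minPair {n : ℕ} {P : Set (Fin n → ℝ)} (hP : IsLatticePolytope P)
    (hne : P.Nonempty) {u : Fin n → ℝ} (hu : u ∈ polarDual P) : -1 ≤ minPair P u := by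
  obtain ⟨x, _, hxa⟩ := hP.exists_min hne u
  rw [hxa.minPair_eq]
  exact hu x hxa.1

-- Pi.single helpers
lemma single_nonneg' {k : ℕ} (i0 i : Fin k) : (0:ℝ) ≤ (Pi.single i0 1 : Fin k → ℝ) i := by
  rw [Pi.single_apply]; split_ifs <;> norm_num

lemma single_le_one' {k : ℕ} (i0 i : Fin k) : (Pi.single i0 1 : Fin k → ℝ) i ≤ 1 := by
  rw [Pi.single_apply]; split_ifs <;> norm_num

lemma single_pair {k : ℕ} {i j : Fin k} (h : i ≠ j) (i0 : Fin k) :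
    (Pi.single i0 1 : Fin k → ℝ) i + (Pi.single i0 1 : Fin k → ℝ) j ≤ 1 := by
  rw [Pi.single_apply, Pi.single_apply]
  split_ifs with h1 h2 h2
  · exact absurd (h1.trans h2.symm) h
  all_goals norm_num

lemma single_int {k : ℕ} (i0 i : Fin k) : ∃ z : ℤ, (Pi.single i0 1 : Fin k → ℝ) i = (z : ℝ) := by
  rw [Pi.single_apply]; split_ifs
  · exact ⟨1, by norm_num⟩
  · exact ⟨0, by norm_num⟩

lemma isLatticePt_single {k : ℕ} (i0 : Fin k) : IsLatticePt (Pi.single i0 1 : Fin k → ℝ) :=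
  fun i => single_int i0 i

lemma IsLatticePt.add' {n : ℕ} {x y : Fin n → ℝ} (hx : IsLatticePt x) (hy : IsLatticePt y) :
    IsLatticePt (x + y) := by
  intro i
  obtain ⟨a, ha⟩ := hx i; obtain ⟨b, hb⟩ := hy i
  exact ⟨a + b, by simp [ha, hb]⟩

lemma IsLatticePt.neg' {n : ℕ} {x : Fin n → ℝ} (hx : IsLatticePt x) : IsLatticePt (-x) := by
  intro i; obtain ⟨a, ha⟩ := hx i; exact ⟨-a, by simp [ha]⟩

lemma IsLatticePt.sub' {n : ℕ} {x y : Fin n → ℝ} (hx : IsLatticePt x) (hy : IsLatticePt y) :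
    IsLatticePt (x - y) := by
  rw [sub_eq_add_neg]; exact hx.add' hy.neg'

lemma int_trichotomy {x : ℝ} (hz : ∃ z : ℤ, x = (z : ℝ)) (h1 : -1 ≤ x) (h2 : x ≤ 1) :
    x = -1 ∨ x = 0 ∨ x = 1 := by
  obtain ⟨z, rfl⟩ := hz
  have l1 : (-1 : ℤ) ≤ z := by exact_mod_cast h1
  have l2 : z ≤ (1 : ℤ) := by exact_mod_cast h2
  have : z = -1 ∨ z = 0 ∨ z = 1 := by omega
  rcases this with h | h | h <;> subst h <;> norm_num

lemma int_dichotomy {x : ℝ} (hz : ∃ z : ℤ, x = (z : ℝ)) (h1 : 0 ≤ x) (h2 : x ≤ 1) :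
    x = 0 ∨ x = 1 := by
  obtain ⟨z, rfl⟩ := hz
  have l1 : (0 : ℤ) ≤ z := by exact_mod_cast h1
  have l2 : z ≤ (1 : ℤ) := by exact_mod_cast h2
  have : z = 0 ∨ z = 1 := by omega
  rcases this with h | h <;> subst h <;> norm_num

lemma int_dichotomy' {x : ℝ} (hz : ∃ z : ℤ, x = (z : ℝ)) (h1 : -1 ≤ x) (h2 : x ≤ 0) :
    x = -1 ∨ x = 0 := by
  obtain ⟨z, rfl⟩ := hz
  have l1 : (-1 : ℤ) ≤ z := by exact_mod_cast h1
  have l2 : z ≤ (0 : ℤ) := by exact_mod_cast h2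
  have : z = -1 ∨ z = 0 := by omega
  rcases this with h | h <;> subst h <;> norm_num

-- Part D : constraint sets

section CD
variable {d k : ℕ}

/-- second component of the shift vectors -/
def gvec : Fin (k+1) → (Fin k → ℝ) := Fin.cases 0 (fun i => Pi.single i 1)

/-- the shift vectors `f 0 = 0`, `f (i+1) = eᵢ*` -/
def fvec (j : Fin (k+1)) : Vdk d k := ((0 : Fin d → ℝ), gvec j)

@[simp] lemma gvec_zero : (gvec 0 : Fin k → ℝ) = 0 := rfl
@[simp] lemma gvec_succ (i : Fin k) : gvec i.succ = (Pi.single i 1 : Fin k → ℝ) := by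
  simp [gvec]

lemma gvec_nonneg (j : Fin (k+1)) (i : Fin k) : 0 ≤ gvec j i := by
  induction j using Fin.cases with
  | zero => simp
  | succ c => rw [gvec_succ]; exact single_nonneg' c i

lemma gvec_le_one (j : Fin (k+1)) (i : Fin k) : gvec j i ≤ 1 := by
  induction j using Fin.cases with
  | zero => simp
  | succ c => rw [gvec_succ]; exact single_le_one' c i

lemma gvec_pair {i i' : Fin k} (h : i ≠ i') (j : Fin (k+1)) :
    gvec j i + gvec j i' ≤ 1 := by
  induction j using Fin.cases with
  | zero => simp
  | succ c => rw [gvec_succ]; exact single_pair h c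

lemma gvec_int (j : Fin (k+1)) (i : Fin k) : ∃ z : ℤ, gvec j i = (z : ℝ) := by
  induction j using Fin.cases with
  | zero => exact ⟨0, by simp⟩
  | succ c => rw [gvec_succ]; exact single_int c i

lemma isLatticePt_gvec (j : Fin (k+1)) : IsLatticePt (gvec j) := fun i => gvec_int j i

variable (Δ : Fin (k+1) → Set (Fin d → ℝ))

/-- convex region containing `∇̂₀` with the same lattice points -/
def Cone : Set (Vdk d k) :=
  {p | p.1 ∈ polarDual (∑ i, Δ i) ∧
       (∀ i, -(minPair (Δ i.succ) p.1) ≤ p.2 i) ∧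
       (∀ i : Fin k, p.2 i + -(minPair (Δ 0) p.1) +
          ∑ j ∈ Finset.univ.erase i, -(minPair (Δ j.succ) p.1) ≤ 1) ∧
       (∀ i j : Fin k, i ≠ j → p.2 i + p.2 j + -(minPair (Δ 0) p.1) +
          ∑ l ∈ (Finset.univ.erase i).erase j, -(minPair (Δ l.succ) p.1) ≤ 1)}

/-- convex region containing `∇̂₀ ⊎ ⋯ ⊎ ∇̂_k` with the same lattice points -/
def Cthree : Set (Vdk d k) :=
  {p | p.1 ∈ polarDual (∑ i, Δ i) ∧
       (∀ i, -(minPair (Δ i.succ) p.1) - 1 ≤ p.2 i) ∧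
       (∀ i : Fin k, p.2 i + -(minPair (Δ 0) p.1) +
          ∑ j ∈ Finset.univ.erase i, -(minPair (Δ j.succ) p.1) ≤ 1) ∧
       (∀ i j : Fin k, i ≠ j → p.2 i + p.2 j + -(minPair (Δ 0) p.1) +
          ∑ l ∈ (Finset.univ.erase i).erase j, -(minPair (Δ l.succ) p.1) ≤ 1) ∧
       (∀ i j : Fin k, i ≠ j →
          -1 ≤ p.2 i + p.2 j + minPair (Δ i.succ) p.1 + minPair (Δ j.succ) p.1)}

variable {Δ}

lemma psi_combo (hlat : ∀ i, IsLatticePolytope (Δ i)) (hne : ∀ i, (Δ i).Nonempty)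
    (i : Fin (k+1)) {u v : Fin d → ℝ} {a b : ℝ} (ha : 0 ≤ a) (hb : 0 ≤ b) :
    -(minPair (Δ i) (a • u + b • v)) ≤ a * -(minPair (Δ i) u) + b * -(minPair (Δ i) v) := by
  have := minPair_combo (hlat i) (hne i) (u := u) (v := v) ha hb
  linarith

lemma psi_sum_combo (hlat : ∀ i, IsLatticePolytope (Δ i)) (hne : ∀ i, (Δ i).Nonempty)
    (s : Finset (Fin k)) {u v : Fin d → ℝ} {a b : ℝ} (ha : 0 ≤ a) (hb : 0 ≤ b) :
    ∑ j ∈ s, -(minPair (Δ j.succ) (a • u + b • v)) ≤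
      a * ∑ j ∈ s, -(minPair (Δ j.succ) u) + b * ∑ j ∈ s, -(minPair (Δ j.succ) v) := by
  calc ∑ j ∈ s, -(minPair (Δ j.succ) (a • u + b • v))
      ≤ ∑ j ∈ s, (a * -(minPair (Δ j.succ) u) + b * -(minPair (Δ j.succ) v)) :=
        Finset.sum_le_sum fun j _ => psi_combo hlat hne j.succ ha hb
    _ = a * ∑ j ∈ s, -(minPair (Δ j.succ) u) + b * ∑ j ∈ s, -(minPair (Δ j.succ) v) := by
        rw [Finset.sum_add_distrib, ← Finset.mul_sum, ← Finset.mul_sum]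

lemma convex_Cone (hlat : ∀ i, IsLatticePolytope (Δ i)) (hne : ∀ i, (Δ i).Nonempty) :
    Convex ℝ (Cone Δ) := by
  intro p hp q hq a b ha hb hab
  obtain ⟨hp1, hp2, hp3, hp4⟩ := hp
  obtain ⟨hq1, hq2, hq3, hq4⟩ := hq
  have hfst : (a • p + b • q).1 = a • p.1 + b • q.1 := rfl
  have hsnd : ∀ i, (a • p + b • q).2 i = a * p.2 i + b * q.2 i := fun i => rfl
  refine ⟨?_, ?_, ?_, ?_⟩
  · rw [hfst]; exact convex_polarDual _ hp1 hq1 ha hb hab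
  · intro i
    rw [hfst, hsnd i]
    have h1 := psi_combo hlat hne i.succ (u := p.1) (v := q.1) ha hb
    have h2 := mul_le_mul_of_nonneg_left (hp2 i) ha
    have h3 := mul_le_mul_of_nonneg_left (hq2 i) hb
    linarith
  · intro i
    rw [hfst, hsnd i]
    have h1 := psi_combo hlat hne 0 (u := p.1) (v := q.1) ha hb
    have h2 := psi_sum_combo hlat hne (Finset.univ.erase i) (u := p.1) (v := q.1) ha hb
    have h3 := mul_le_mul_of_nonneg_left (hp3 i) ha
    have h4 := mul_le_mul_of_nonneg_left (hq3 i) hb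
    rw [mul_one] at h3 h4
    have e3 : a * (p.2 i + -(minPair (Δ 0) p.1) +
        ∑ j ∈ Finset.univ.erase i, -(minPair (Δ j.succ) p.1)) =
        a * p.2 i + a * -(minPair (Δ 0) p.1) +
        a * ∑ j ∈ Finset.univ.erase i, -(minPair (Δ j.succ) p.1) := by ring
    have e4 : b * (q.2 i + -(minPair (Δ 0) q.1) +
        ∑ j ∈ Finset.univ.erase i, -(minPair (Δ j.succ) q.1)) =
        b * q.2 i + b * -(minPair (Δ 0) q.1) +
        b * ∑ j ∈ Finset.univ.erase i, -(minPair (Δ j.succ) q.1) := by ring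
    linarith
  · intro i j hij
    rw [hfst, hsnd i, hsnd j]
    have h1 := psi_combo hlat hne 0 (u := p.1) (v := q.1) ha hb
    have h2 := psi_sum_combo hlat hne ((Finset.univ.erase i).erase j) (u := p.1) (v := q.1) ha hb
    have h3 := mul_le_mul_of_nonneg_left (hp4 i j hij) ha
    have h4 := mul_le_mul_of_nonneg_left (hq4 i j hij) hb
    rw [mul_one] at h3 h4
    have e3 : a * (p.2 i + p.2 j + -(minPair (Δ 0) p.1) +
        ∑ l ∈ (Finset.univ.erase i).erase j, -(minPair (Δ l.succ) p.1)) =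
        a * p.2 i + a * p.2 j + a * -(minPair (Δ 0) p.1) +
        a * ∑ l ∈ (Finset.univ.erase i).erase j, -(minPair (Δ l.succ) p.1) := by ring
    have e4 : b * (q.2 i + q.2 j + -(minPair (Δ 0) q.1) +
        ∑ l ∈ (Finset.univ.erase i).erase j, -(minPair (Δ l.succ) q.1)) =
        b * q.2 i + b * q.2 j + b * -(minPair (Δ 0) q.1) +
        b * ∑ l ∈ (Finset.univ.erase i).erase j, -(minPair (Δ l.succ) q.1) := by ring
    linarith

lemma convex_Cthree (hlat : ∀ i, IsLatticePolytope (Δ i)) (hne : ∀ i, (Δ i).Nonempty) :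
    Convex ℝ (Cthree Δ) := by
  intro p hp q hq a b ha hb hab
  obtain ⟨hp1, hp2, hp3, hp4, hp5⟩ := hp
  obtain ⟨hq1, hq2, hq3, hq4, hq5⟩ := hq
  have hfst : (a • p + b • q).1 = a • p.1 + b • q.1 := rfl
  have hsnd : ∀ i, (a • p + b • q).2 i = a * p.2 i + b * q.2 i := fun i => rfl
  refine ⟨?_, ?_, ?_, ?_, ?_⟩
  · rw [hfst]; exact convex_polarDual _ hp1 hq1 ha hb hab
  · intro i
    rw [hfst, hsnd i]
    have h1 := psi_combo hlat hne i.succ (u := p.1) (v := q.1) ha hb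
    have h2 := mul_le_mul_of_nonneg_left (hp2 i) ha
    have h3 := mul_le_mul_of_nonneg_left (hq2 i) hb
    have e2 : a * (-(minPair (Δ i.succ) p.1) - 1) = a * -(minPair (Δ i.succ) p.1) - a := by ring
    have e3 : b * (-(minPair (Δ i.succ) q.1) - 1) = b * -(minPair (Δ i.succ) q.1) - b := by ring
    linarith
  · intro i
    rw [hfst, hsnd i]
    have h1 := psi_combo hlat hne 0 (u := p.1) (v := q.1) ha hb
    have h2 := psi_sum_combo hlat hne (Finset.univ.erase i) (u := p.1) (v := q.1) ha hb
    have h3 := mul_le_mul_of_nonneg_left (hp3 i) ha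
    have h4 := mul_le_mul_of_nonneg_left (hq3 i) hb
    rw [mul_one] at h3 h4
    have e3 : a * (p.2 i + -(minPair (Δ 0) p.1) +
        ∑ j ∈ Finset.univ.erase i, -(minPair (Δ j.succ) p.1)) =
        a * p.2 i + a * -(minPair (Δ 0) p.1) +
        a * ∑ j ∈ Finset.univ.erase i, -(minPair (Δ j.succ) p.1) := by ring
    have e4 : b * (q.2 i + -(minPair (Δ 0) q.1) +
        ∑ j ∈ Finset.univ.erase i, -(minPair (Δ j.succ) q.1)) =
        b * q.2 i + b * -(minPair (Δ 0) q.1) +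
        b * ∑ j ∈ Finset.univ.erase i, -(minPair (Δ j.succ) q.1) := by ring
    linarith
  · intro i j hij
    rw [hfst, hsnd i, hsnd j]
    have h1 := psi_combo hlat hne 0 (u := p.1) (v := q.1) ha hb
    have h2 := psi_sum_combo hlat hne ((Finset.univ.erase i).erase j) (u := p.1) (v := q.1) ha hb
    have h3 := mul_le_mul_of_nonneg_left (hp4 i j hij) ha
    have h4 := mul_le_mul_of_nonneg_left (hq4 i j hij) hb
    rw [mul_one] at h3 h4
    have e3 : a * (p.2 i + p.2 j + -(minPair (Δ 0) p.1) +
        ∑ l ∈ (Finset.univ.erase i).erase j, -(minPair (Δ l.succ) p.1)) =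
        a * p.2 i + a * p.2 j + a * -(minPair (Δ 0) p.1) +
        a * ∑ l ∈ (Finset.univ.erase i).erase j, -(minPair (Δ l.succ) p.1) := by ring
    have e4 : b * (q.2 i + q.2 j + -(minPair (Δ 0) q.1) +
        ∑ l ∈ (Finset.univ.erase i).erase j, -(minPair (Δ l.succ) q.1)) =
        b * q.2 i + b * q.2 j + b * -(minPair (Δ 0) q.1) +
        b * ∑ l ∈ (Finset.univ.erase i).erase j, -(minPair (Δ l.succ) q.1) := by ring
    linarith
  · intro i j hij
    rw [hfst, hsnd i, hsnd j]
    have h1 := minPair_combo (hlat i.succ) (hne i.succ) (u := p.1) (v := q.1) ha hb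
    have h2 := minPair_combo (hlat j.succ) (hne j.succ) (u := p.1) (v := q.1) ha hb
    have h3 := mul_le_mul_of_nonneg_left (hp5 i j hij) ha
    have h4 := mul_le_mul_of_nonneg_left (hq5 i j hij) hb
    have e3 : a * (p.2 i + p.2 j + minPair (Δ i.succ) p.1 + minPair (Δ j.succ) p.1) =
        a * p.2 i + a * p.2 j + a * minPair (Δ i.succ) p.1 + a * minPair (Δ j.succ) p.1 := by
      ring
    have e4 : b * (q.2 i + q.2 j + minPair (Δ i.succ) q.1 + minPair (Δ j.succ) q.1) =
        b * q.2 i + b * q.2 j + b * minPair (Δ i.succ) q.1 + b * minPair (Δ j.succ) q.1 := by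
      ring
    have e5 : a * (-1 : ℝ) + b * (-1) = -1 := by rw [← add_mul, hab]; ring
    linarith

end CD

-- Part E : generator membership

lemma isLatticePt_sum {n : ℕ} {ι : Type*} (s : Finset ι) (x : ι → Fin n → ℝ)
    (h : ∀ i ∈ s, IsLatticePt (x i)) : IsLatticePt (∑ i ∈ s, x i) := by
  induction s using Finset.cons_induction with
  | empty => simpa using isLatticePt_zero
  | cons a s ha ih =>
      rw [Finset.sum_cons]
      exact (h a (Finset.mem_cons_self a s)).add'
        (ih fun i hi => h i (Finset.mem_cons_of_mem hi))

lemma erase_sum_id {k : ℕ} (i : Fin k) (g : Fin k → ℝ) :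
    ∑ j ∈ Finset.univ.erase i, g j = (∑ j, g j) - g i := by
  have := Finset.add_sum_erase Finset.univ g (Finset.mem_univ i)
  linarith

lemma erase_erase_sum_id {k : ℕ} {i j : Fin k} (hij : i ≠ j) (g : Fin k → ℝ) :
    ∑ l ∈ (Finset.univ.erase i).erase j, g l = (∑ l, g l) - g i - g j := by
  have hj : j ∈ Finset.univ.erase i := Finset.mem_erase.2 ⟨hij.symm, Finset.mem_univ j⟩
  have h1 := Finset.add_sum_erase (Finset.univ.erase i) g hj
  have h2 := Finset.add_sum_erase Finset.univ g (Finset.mem_univ i)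
  linarith

section CE
variable {d k : ℕ} {Δ : Fin (k+1) → Set (Fin d → ℝ)}

lemma Dattain (hlat : ∀ i, IsLatticePolytope (Δ i)) (hne : ∀ i, (Δ i).Nonempty)
    (u : Fin d → ℝ) : ∃ x, IsLatticePt x ∧ AttainsMin (∑ i, Δ i) u x := by
  have h : ∀ i : Fin (k+1), ∃ x, IsLatticePt x ∧ AttainsMin (Δ i) u x :=
    fun i => (hlat i).exists_min (hne i) u
  choose x hxl hxa using h
  exact ⟨∑ i, x i, isLatticePt_sum _ _ (fun i _ => hxl i),
    attainsMin_sum _ _ _ _ (fun i _ => hxa i)⟩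

lemma minPair_sum_split (hlat : ∀ i, IsLatticePolytope (Δ i)) (hne : ∀ i, (Δ i).Nonempty)
    (u : Fin d → ℝ) :
    minPair (∑ i, Δ i) u = minPair (Δ 0) u + ∑ j : Fin k, minPair (Δ j.succ) u := by
  have h : ∀ i : Fin (k+1), ∃ x, IsLatticePt x ∧ AttainsMin (Δ i) u x :=
    fun i => (hlat i).exists_min (hne i) u
  choose x _ hxa using h
  rw [minPair_sum Finset.univ Δ u x (fun i _ => hxa i), Fin.sum_univ_succ]

lemma Mbound (hlat : ∀ i, IsLatticePolytope (Δ i)) (hne : ∀ i, (Δ i).Nonempty)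
    {u : Fin d → ℝ} (hu : u ∈ polarDual (∑ i, Δ i)) :
    -(minPair (Δ 0) u) + ∑ j : Fin k, -(minPair (Δ j.succ) u) ≤ 1 := by
  have hs := minPair_sum_split hlat hne u
  obtain ⟨x, _, hxa⟩ := Dattain hlat hne u
  have h1 : -1 ≤ minPair (∑ i, Δ i) u := by rw [hxa.minPair_eq]; exact hu x hxa.1
  have h2 : ∑ j : Fin k, -(minPair (Δ j.succ) u) = -(∑ j : Fin k, minPair (Δ j.succ) u) := by
    rw [Finset.sum_neg_distrib]
  linarith

lemma F_mem_Cone (hlat : ∀ i, IsLatticePolytope (Δ i)) (hne : ∀ i, (Δ i).Nonempty)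
    {u : Fin d → ℝ} (hu : u ∈ polarDual (∑ i, Δ i)) :
    ((u, fun i : Fin k => -(minPair (Δ i.succ) u)) : Vdk d k) ∈ Cone Δ := by
  have hM := Mbound hlat hne hu
  refine ⟨hu, fun i => le_refl _, fun i => ?_, fun i j hij => ?_⟩
  · show -(minPair (Δ i.succ) u) + -(minPair (Δ 0) u) +
      ∑ j ∈ Finset.univ.erase i, -(minPair (Δ j.succ) u) ≤ 1
    rw [erase_sum_id i (fun j => -(minPair (Δ j.succ) u))]
    linarith
  · show -(minPair (Δ i.succ) u) + -(minPair (Δ j.succ) u) + -(minPair (Δ 0) u) +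
      ∑ l ∈ (Finset.univ.erase i).erase j, -(minPair (Δ l.succ) u) ≤ 1
    rw [erase_erase_sum_id hij (fun l => -(minPair (Δ l.succ) u))]
    linarith

lemma eps_mem_Cone (hlat : ∀ i, IsLatticePolytope (Δ i)) (hne : ∀ i, (Δ i).Nonempty)
    (i0 : Fin k) : (((0 : Fin d → ℝ), Pi.single i0 1) : Vdk d k) ∈ Cone Δ := by
  have hz : ∀ i : Fin (k+1), minPair (Δ i) (0 : Fin d → ℝ) = 0 :=
    fun i => minPair_zero_right (hlat i) (hne i)
  refine ⟨zero_mem_polarDual _, fun i => ?_, fun i => ?_, fun i j hij => ?_⟩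
  · show -(minPair (Δ i.succ) 0) ≤ (Pi.single i0 1 : Fin k → ℝ) i
    rw [hz i.succ]; simpa using single_nonneg' i0 i
  · show (Pi.single i0 1 : Fin k → ℝ) i + -(minPair (Δ 0) (0:Fin d → ℝ)) +
      ∑ j ∈ Finset.univ.erase i, -(minPair (Δ j.succ) (0:Fin d → ℝ)) ≤ 1
    rw [hz 0, Finset.sum_eq_zero (fun j _ => by rw [hz j.succ, neg_zero])]
    simpa using single_le_one' i0 i
  · show (Pi.single i0 1 : Fin k → ℝ) i + (Pi.single i0 1 : Fin k → ℝ) j +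
      -(minPair (Δ 0) (0:Fin d → ℝ)) +
      ∑ l ∈ (Finset.univ.erase i).erase j, -(minPair (Δ l.succ) (0:Fin d → ℝ)) ≤ 1
    rw [hz 0, Finset.sum_eq_zero (fun l _ => by rw [hz l.succ, neg_zero])]
    have := single_pair hij i0
    linarith

lemma F_sub_mem_Cthree (hlat : ∀ i, IsLatticePolytope (Δ i)) (hne : ∀ i, (Δ i).Nonempty)
    {u : Fin d → ℝ} (hu : u ∈ polarDual (∑ i, Δ i)) (j0 : Fin (k+1)) :
    (((u, fun i : Fin k => -(minPair (Δ i.succ) u)) : Vdk d k) - fvec j0) ∈ Cthree Δ := by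
  have hM := Mbound hlat hne hu
  have hfst : (((u, fun i : Fin k => -(minPair (Δ i.succ) u)) : Vdk d k) - fvec j0).1 = u := by
    show u - 0 = u; rw [sub_zero]
  have hsnd : ∀ i, (((u, fun i : Fin k => -(minPair (Δ i.succ) u)) : Vdk d k) - fvec j0).2 i
      = -(minPair (Δ i.succ) u) - gvec j0 i := fun i => rfl
  refine ⟨?_, fun i => ?_, fun i => ?_, fun i j hij => ?_, fun i j hij => ?_⟩
  · rw [hfst]; exact hu
  · rw [hfst, hsnd i]
    have := gvec_le_one j0 i
    linarith
  · rw [hfst, hsnd i, erase_sum_id i (fun j => -(minPair (Δ j.succ) u))]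
    have := gvec_nonneg j0 i
    linarith
  · rw [hfst, hsnd i, hsnd j, erase_erase_sum_id hij (fun l => -(minPair (Δ l.succ) u))]
    have h1 := gvec_nonneg j0 i
    have h2 := gvec_nonneg j0 j
    linarith
  · rw [hfst, hsnd i, hsnd j]
    have := gvec_pair hij j0
    linarith

lemma eps_sub_mem_Cthree (hlat : ∀ i, IsLatticePolytope (Δ i)) (hne : ∀ i, (Δ i).Nonempty)
    (i0 : Fin k) (j0 : Fin (k+1)) :
    ((((0 : Fin d → ℝ), Pi.single i0 1) : Vdk d k) - fvec j0) ∈ Cthree Δ := by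
  have hz : ∀ i : Fin (k+1), minPair (Δ i) (0 : Fin d → ℝ) = 0 :=
    fun i => minPair_zero_right (hlat i) (hne i)
  have hfst : ((((0 : Fin d → ℝ), Pi.single i0 1) : Vdk d k) - fvec j0).1 = 0 := by
    show (0 : Fin d → ℝ) - 0 = 0; rw [sub_zero]
  have hsnd : ∀ i, ((((0 : Fin d → ℝ), Pi.single i0 1) : Vdk d k) - fvec j0).2 i
      = (Pi.single i0 1 : Fin k → ℝ) i - gvec j0 i := fun i => rfl
  refine ⟨?_, fun i => ?_, fun i => ?_, fun i j hij => ?_, fun i j hij => ?_⟩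
  · rw [hfst]; exact zero_mem_polarDual _
  · rw [hfst, hsnd i, hz i.succ]
    have h1 := gvec_le_one j0 i
    have h2 := single_nonneg' i0 i
    linarith
  · rw [hfst, hsnd i, hz 0,
      Finset.sum_eq_zero (fun j _ => by rw [hz j.succ, neg_zero])]
    have h1 := gvec_nonneg j0 i
    have h2 := single_le_one' i0 i
    linarith
  · rw [hfst, hsnd i, hsnd j, hz 0,
      Finset.sum_eq_zero (fun l _ => by rw [hz l.succ, neg_zero])]
    have h1 := gvec_nonneg j0 i
    have h2 := gvec_nonneg j0 j
    have h3 := single_pair hij i0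
    linarith
  · rw [hfst, hsnd i, hsnd j, hz i.succ, hz j.succ]
    have h1 := single_nonneg' i0 i
    have h2 := single_nonneg' i0 j
    have h3 := gvec_pair hij j0
    linarith

end CE

-- Part F : extraction of lattice points

section CF
variable {d k : ℕ} {Δ : Fin (k+1) → Set (Fin d → ℝ)}

lemma extract_Cone (hlat : ∀ i, IsLatticePolytope (Δ i)) (hne : ∀ i, (Δ i).Nonempty)
    (hDlat : IsLatticePolytope (∑ i, Δ i))
    (h0 : (0 : Fin d → ℝ) ∈ interior (∑ i, Δ i))
    {p : Vdk d k} (hp : p ∈ Cone Δ) (hl : IsLatticePtV p) :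
    (∃ n, (n ∈ polarDual (∑ i, Δ i) ∧ IsLatticePt n) ∧
        ((n, fun i : Fin k => -(minPair (Δ i.succ) n)) : Vdk d k) = p) ∨
      (∃ i : Fin k, p = (((0 : Fin d → ℝ), Pi.single i 1) : Vdk d k)) := by
  obtain ⟨hc1, hc2, hc3, hc4⟩ := hp
  obtain ⟨hl1, hl2⟩ := hl
  have hDne : (∑ i, Δ i).Nonempty := ⟨0, interior_subset h0⟩
  have hsplit : minPair (∑ i, Δ i) p.1
      = minPair (Δ 0) p.1 + ∑ j : Fin k, minPair (Δ j.succ) p.1 :=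
    minPair_sum_split hlat hne p.1
  obtain ⟨xD, _, hxD⟩ := Dattain hlat hne p.1
  have hge : -1 ≤ minPair (∑ i, Δ i) p.1 := by
    rw [hxD.minPair_eq]; exact hc1 xD hxD.1
  have hM0 : 0 ≤ -(minPair (∑ i, Δ i) p.1) := by
    have := hxD.minPair_le (interior_subset h0)
    rw [pairing_zero_left] at this
    linarith
  have hMcase : -(minPair (∑ i, Δ i) p.1) = 0 ∨ -(minPair (∑ i, Δ i) p.1) = 1 := by
    obtain ⟨z, hz⟩ := minPair_int hDlat hDne hl1
    exact int_dichotomy ⟨-z, by rw [hz]; push_cast; ring⟩ hM0 (by linarith)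
  have hb0 : ∀ i, 0 ≤ p.2 i + minPair (Δ i.succ) p.1 := fun i => by
    have := hc2 i; linarith
  have hb1 : ∀ i, p.2 i + minPair (Δ i.succ) p.1 + -(minPair (∑ i, Δ i) p.1) ≤ 1 := by
    intro i
    have h := hc3 i
    rw [erase_sum_id i (fun j => -(minPair (Δ j.succ) p.1))] at h
    rw [hsplit]
    have hsum : ∑ j : Fin k, -(minPair (Δ j.succ) p.1)
        = -∑ j : Fin k, minPair (Δ j.succ) p.1 := Finset.sum_neg_distrib _
    rw [hsum] at h
    linarith
  have hbpair : ∀ i j, i ≠ j → (p.2 i + minPair (Δ i.succ) p.1) +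
      (p.2 j + minPair (Δ j.succ) p.1) + -(minPair (∑ i, Δ i) p.1) ≤ 1 := by
    intro i j hij
    have h := hc4 i j hij
    rw [erase_erase_sum_id hij (fun l => -(minPair (Δ l.succ) p.1))] at h
    rw [hsplit]
    have hsum : ∑ j : Fin k, -(minPair (Δ j.succ) p.1)
        = -∑ j : Fin k, minPair (Δ j.succ) p.1 := Finset.sum_neg_distrib _
    rw [hsum] at h
    linarith
  rcases hMcase with hM | hM
  · -- M = 0, hence p.1 = 0
    have hn0 : p.1 = 0 := by
      by_contra hne0
      have := minPair_neg_of_ne_zero hDlat h0 hne0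
      linarith
    have hz : ∀ i : Fin k, minPair (Δ i.succ) p.1 = 0 := fun i => by
      rw [hn0]; exact minPair_zero_right (hlat i.succ) (hne i.succ)
    have hbounds : ∀ i, p.2 i = 0 ∨ p.2 i = 1 := by
      intro i
      refine int_dichotomy (hl2 i) ?_ ?_
      · have := hb0 i; rw [hz i] at this; linarith
      · have h := hb1 i; rw [hz i, hM] at h; linarith
    by_cases hex : ∃ i0, p.2 i0 = 1
    · obtain ⟨i0, hi0⟩ := hex
      right
      refine ⟨i0, Prod.ext hn0 (funext fun j => ?_)⟩
      show p.2 j = (Pi.single i0 1 : Fin k → ℝ) j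
      by_cases hji : j = i0
      · subst hji; rw [hi0, Pi.single_apply, if_pos rfl]
      · have h := hbpair j i0 hji
        rw [hz j, hz i0, hM, hi0] at h
        have h0' := hb0 j; rw [hz j] at h0'
        rw [Pi.single_apply, if_neg hji]
        linarith
    · left
      push_neg at hex
      have hall : ∀ i, p.2 i = 0 := fun i =>
        (hbounds i).resolve_right (fun h => hex i h)
      refine ⟨0, ⟨zero_mem_polarDual _, isLatticePt_zero⟩, Prod.ext hn0.symm ?_⟩
      funext i
      show -(minPair (Δ i.succ) (0 : Fin d → ℝ)) = p.2 i
      rw [minPair_zero_right (hlat i.succ) (hne i.succ), neg_zero, hall i]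
  · -- M = 1
    have hb00 : ∀ i, p.2 i + minPair (Δ i.succ) p.1 = 0 := by
      intro i
      have h1 := hb0 i
      have h2 := hb1 i
      rw [hM] at h2
      linarith
    left
    refine ⟨p.1, ⟨hc1, hl1⟩, Prod.ext rfl ?_⟩
    funext i
    show -(minPair (Δ i.succ) p.1) = p.2 i
    have := hb00 i
    linarith

lemma extract_Cthree (hlat : ∀ i, IsLatticePolytope (Δ i)) (hne : ∀ i, (Δ i).Nonempty)
    (hDlat : IsLatticePolytope (∑ i, Δ i))
    (h0 : (0 : Fin d → ℝ) ∈ interior (∑ i, Δ i))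
    {p : Vdk d k} (hp : p ∈ Cthree Δ) (hl : IsLatticePtV p) :
    (∃ n, (n ∈ polarDual (∑ i, Δ i) ∧ IsLatticePt n) ∧ ∃ j : Fin (k+1),
        ((n, fun i : Fin k => -(minPair (Δ i.succ) n)) : Vdk d k) - fvec j = p) ∨
      (∃ i : Fin k, ∃ j : Fin (k+1), j ≠ i.succ ∧
        (((0 : Fin d → ℝ), Pi.single i 1) : Vdk d k) - fvec j = p) := by
  obtain ⟨hc1, hc2, hc3, hc4, hc5⟩ := hp
  obtain ⟨hl1, hl2⟩ := hl
  have hDne : (∑ i, Δ i).Nonempty := ⟨0, interior_subset h0⟩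
  have hsplit : minPair (∑ i, Δ i) p.1
      = minPair (Δ 0) p.1 + ∑ j : Fin k, minPair (Δ j.succ) p.1 :=
    minPair_sum_split hlat hne p.1
  obtain ⟨xD, _, hxD⟩ := Dattain hlat hne p.1
  have hge : -1 ≤ minPair (∑ i, Δ i) p.1 := by
    rw [hxD.minPair_eq]; exact hc1 xD hxD.1
  have hM0 : 0 ≤ -(minPair (∑ i, Δ i) p.1) := by
    have := hxD.minPair_le (interior_subset h0)
    rw [pairing_zero_left] at this
    linarith
  have hMcase : -(minPair (∑ i, Δ i) p.1) = 0 ∨ -(minPair (∑ i, Δ i) p.1) = 1 := by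
    obtain ⟨z, hz⟩ := minPair_int hDlat hDne hl1
    exact int_dichotomy ⟨-z, by rw [hz]; push_cast; ring⟩ hM0 (by linarith)
  have hbint : ∀ i : Fin k, ∃ z : ℤ, p.2 i + minPair (Δ i.succ) p.1 = (z : ℝ) := by
    intro i
    obtain ⟨z1, hz1⟩ := hl2 i
    obtain ⟨z2, hz2⟩ := minPair_int (hlat i.succ) (hne i.succ) hl1
    exact ⟨z1 + z2, by rw [hz1, hz2]; push_cast; ring⟩
  have hbm1 : ∀ i, -1 ≤ p.2 i + minPair (Δ i.succ) p.1 := fun i => by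
    have := hc2 i; linarith
  have hb1 : ∀ i, p.2 i + minPair (Δ i.succ) p.1 + -(minPair (∑ i, Δ i) p.1) ≤ 1 := by
    intro i
    have h := hc3 i
    rw [erase_sum_id i (fun j => -(minPair (Δ j.succ) p.1))] at h
    rw [hsplit]
    have hsum : ∑ j : Fin k, -(minPair (Δ j.succ) p.1)
        = -∑ j : Fin k, minPair (Δ j.succ) p.1 := Finset.sum_neg_distrib _
    rw [hsum] at h
    linarith
  have hbpair : ∀ i j, i ≠ j → (p.2 i + minPair (Δ i.succ) p.1) +
      (p.2 j + minPair (Δ j.succ) p.1) + -(minPair (∑ i, Δ i) p.1) ≤ 1 := by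
    intro i j hij
    have h := hc4 i j hij
    rw [erase_erase_sum_id hij (fun l => -(minPair (Δ l.succ) p.1))] at h
    rw [hsplit]
    have hsum : ∑ j : Fin k, -(minPair (Δ j.succ) p.1)
        = -∑ j : Fin k, minPair (Δ j.succ) p.1 := Finset.sum_neg_distrib _
    rw [hsum] at h
    linarith
  have hbpairlo : ∀ i j, i ≠ j → -1 ≤ (p.2 i + minPair (Δ i.succ) p.1) +
      (p.2 j + minPair (Δ j.succ) p.1) := by
    intro i j hij
    have := hc5 i j hij
    linarith
  rcases hMcase with hM | hM
  · -- M = 0 : p.1 = 0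
    have hn0 : p.1 = 0 := by
      by_contra hne0
      have := minPair_neg_of_ne_zero hDlat h0 hne0
      linarith
    have hz : ∀ i : Fin k, minPair (Δ i.succ) p.1 = 0 := fun i => by
      rw [hn0]; exact minPair_zero_right (hlat i.succ) (hne i.succ)
    have hA1 : ∀ i, p.2 i ≤ 1 := fun i => by
      have h := hb1 i; rw [hz i, hM] at h; linarith
    have hAm : ∀ i, -1 ≤ p.2 i := fun i => by
      have h := hbm1 i; rw [hz i] at h; linarith
    have htri : ∀ i, p.2 i = -1 ∨ p.2 i = 0 ∨ p.2 i = 1 := fun i => by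
      refine int_trichotomy ?_ (hAm i) (hA1 i)
      obtain ⟨z, hz'⟩ := hbint i; rw [hz i] at hz'; exact ⟨z, by linarith⟩
    have hup : ∀ i j, i ≠ j → p.2 i + p.2 j ≤ 1 := fun i j hij => by
      have h := hbpair i j hij; rw [hz i, hz j, hM] at h; linarith
    have hlo : ∀ i j, i ≠ j → -1 ≤ p.2 i + p.2 j := fun i j hij => by
      have h := hbpairlo i j hij; rw [hz i, hz j] at h; linarith
    by_cases hpos : ∃ i0, p.2 i0 = 1
    · obtain ⟨i0, hi0⟩ := hpos
      by_cases hneg : ∃ j0, p.2 j0 = -1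
      · obtain ⟨j0, hj0⟩ := hneg
        have hne' : i0 ≠ j0 := by
          intro h; rw [h, hj0] at hi0; norm_num at hi0
        right
        refine ⟨i0, j0.succ, ?_, ?_⟩
        · simp only [ne_eq, Fin.succ_inj]
          exact Ne.symm hne'
        · refine Prod.ext (by show (0:Fin d → ℝ) - 0 = p.1; rw [sub_zero, hn0]) ?_
          show Pi.single i0 1 - gvec j0.succ = p.2
          rw [gvec_succ]
          funext l
          show (Pi.single i0 1 : Fin k → ℝ) l - (Pi.single j0 1 : Fin k → ℝ) l = p.2 l
          by_cases hli : l = i0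
          · subst hli
            rw [Pi.single_apply, if_pos rfl, Pi.single_apply, if_neg hne', hi0]
            norm_num
          · by_cases hlj : l = j0
            · subst hlj
              rw [Pi.single_apply, if_neg hli, Pi.single_apply, if_pos rfl, hj0]
              norm_num
            · have h1 := hup l i0 hli
              have h2 := hlo l j0 hlj
              rw [hi0] at h1; rw [hj0] at h2
              rw [Pi.single_apply, if_neg hli, Pi.single_apply, if_neg hlj]
              linarith
      · right
        push_neg at hneg
        refine ⟨i0, 0, (Fin.succ_ne_zero i0).symm, ?_⟩
        refine Prod.ext (by show (0:Fin d → ℝ) - 0 = p.1; rw [sub_zero, hn0]) ?_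
        show Pi.single i0 1 - gvec 0 = p.2
        rw [gvec_zero, sub_zero]
        funext l
        by_cases hli : l = i0
        · subst hli; rw [Pi.single_apply, if_pos rfl, hi0]
        · have h1 := hup l i0 hli
          rw [hi0] at h1
          have h2 : p.2 l ≠ -1 := hneg l
          have h3 := (htri l).resolve_left h2
          rw [Pi.single_apply, if_neg hli]
          rcases h3 with h | h
          · exact h.symm
          · linarith
    · push_neg at hpos
      by_cases hneg : ∃ j0, p.2 j0 = -1
      · obtain ⟨j0, hj0⟩ := hneg
        left
        refine ⟨0, ⟨zero_mem_polarDual _, isLatticePt_zero⟩, j0.succ, ?_⟩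
        refine Prod.ext (by show (0:Fin d → ℝ) - 0 = p.1; rw [sub_zero, hn0]) ?_
        show (fun i : Fin k => -(minPair (Δ i.succ) (0 : Fin d → ℝ))) - gvec j0.succ = p.2
        rw [gvec_succ]
        funext l
        show -(minPair (Δ l.succ) (0 : Fin d → ℝ)) - (Pi.single j0 1 : Fin k → ℝ) l = p.2 l
        rw [minPair_zero_right (hlat l.succ) (hne l.succ), neg_zero]
        by_cases hlj : l = j0
        · subst hlj; rw [Pi.single_apply, if_pos rfl, hj0]; norm_num
        · have h2 := hlo l j0 hlj
          rw [hj0] at h2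
          have h4 : p.2 l = 0 := by
            rcases htri l with h | h | h
            · linarith
            · exact h
            · exact absurd h (hpos l)
          rw [Pi.single_apply, if_neg hlj, h4]
          norm_num
      · push_neg at hneg
        have hall : ∀ i, p.2 i = 0 := by
          intro i
          rcases htri i with h | h | h
          · exact absurd h (hneg i)
          · exact h
          · exact absurd h (hpos i)
        left
        refine ⟨0, ⟨zero_mem_polarDual _, isLatticePt_zero⟩, 0, ?_⟩
        refine Prod.ext (by show (0:Fin d → ℝ) - 0 = p.1; rw [sub_zero, hn0]) ?_
        show (fun i : Fin k => -(minPair (Δ i.succ) (0 : Fin d → ℝ))) - gvec 0 = p.2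
        rw [gvec_zero, sub_zero]
        funext l
        rw [minPair_zero_right (hlat l.succ) (hne l.succ), neg_zero, hall l]
  · -- M = 1
    have hbdi : ∀ i, p.2 i + minPair (Δ i.succ) p.1 = -1 ∨
        p.2 i + minPair (Δ i.succ) p.1 = 0 := by
      intro i
      refine int_dichotomy' (hbint i) (hbm1 i) ?_
      have h := hb1 i; rw [hM] at h; linarith
    by_cases hex : ∃ i0, p.2 i0 + minPair (Δ i0.succ) p.1 = -1
    · obtain ⟨i0, hi0⟩ := hex
      left
      refine ⟨p.1, ⟨hc1, hl1⟩, i0.succ, ?_⟩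
      refine Prod.ext (by show p.1 - 0 = p.1; rw [sub_zero]) ?_
      show (fun i : Fin k => -(minPair (Δ i.succ) p.1)) - gvec i0.succ = p.2
      rw [gvec_succ]
      funext l
      show -(minPair (Δ l.succ) p.1) - (Pi.single i0 1 : Fin k → ℝ) l = p.2 l
      by_cases hli : l = i0
      · subst hli; rw [Pi.single_apply, if_pos rfl]; linarith
      · have h1 := hbpairlo l i0 hli
        rw [hi0] at h1
        have h2 := (hbdi l).resolve_left (by intro h; rw [h] at h1; linarith)
        rw [Pi.single_apply, if_neg hli]
        linarith
    · push_neg at hex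
      have hall : ∀ i, p.2 i + minPair (Δ i.succ) p.1 = 0 := fun i =>
        (hbdi i).resolve_left (hex i)
      left
      refine ⟨p.1, ⟨hc1, hl1⟩, 0, ?_⟩
      refine Prod.ext (by show p.1 - 0 = p.1; rw [sub_zero]) ?_
      show (fun i : Fin k => -(minPair (Δ i.succ) p.1)) - gvec 0 = p.2
      rw [gvec_zero, sub_zero]
      funext l
      show -(minPair (Δ l.succ) p.1) = p.2 l
      have := hall l
      linarith

end CF

-- Part G : counting helpers

lemma ncard_prod' {α β : Type*} (s : Set α) (t : Set β) :
    (s ×ˢ t).ncard = s.ncard * t.ncard := by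
  rw [← Nat.card_coe_set_eq, ← Nat.card_coe_set_eq, ← Nat.card_coe_set_eq,
    Nat.card_congr (Equiv.Set.prod s t), Nat.card_prod]

lemma lattice_finite {m : ℕ} {P : Set (Fin m → ℝ)} (hP : IsLatticePolytope P) :
    {n ∈ P | IsLatticePt n}.Finite := by
  obtain ⟨S, hSfin, -, rfl⟩ := hP
  have hcpt : IsCompact (convexHull ℝ S) := hSfin.isCompact_convexHull (𝕜 := ℝ)
  obtain ⟨C, hC⟩ := isBounded_iff_forall_norm_le.1 hcpt.isBounded
  refine Set.Finite.subset (Set.Finite.image (fun z : Fin m → ℤ => fun i => (z i : ℝ))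
    (Set.Finite.pi (fun _ : Fin m => Set.finite_Icc (-⌈C⌉) ⌈C⌉))) ?_
  rintro x ⟨hx1, hx2⟩
  choose z hz using hx2
  refine ⟨z, ?_, ?_⟩
  · intro i _
    have h1 : |x i| ≤ C := by
      have h := norm_le_pi_norm x i
      rw [Real.norm_eq_abs] at h
      exact h.trans (hC x hx1)
    rw [hz i] at h1
    have h2 : ((|z i| : ℤ) : ℝ) ≤ ((⌈C⌉ : ℤ) : ℝ) := by
      rw [Int.cast_abs]
      exact h1.trans (Int.le_ceil C)
    have h3 : |z i| ≤ ⌈C⌉ := by exact_mod_cast h2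
    exact Set.mem_Icc.2 (abs_le.1 h3)
  · funext i; exact (hz i).symm

lemma single_injective' {k : ℕ} {c c' : Fin k}
    (h : (Pi.single c 1 : Fin k → ℝ) = Pi.single c' 1) : c = c' := by
  by_contra hne
  have h2 := congrFun h c
  rw [Pi.single_apply, if_pos rfl, Pi.single_apply, if_neg hne] at h2
  norm_num at h2

lemma gvec_inj {k : ℕ} {j j' : Fin (k+1)} (h : (gvec j : Fin k → ℝ) = gvec j') : j = j' := by
  rcases Fin.eq_zero_or_eq_succ j with rfl | ⟨c, rfl⟩ <;>
    rcases Fin.eq_zero_or_eq_succ j' with rfl | ⟨c', rfl⟩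
  · rfl
  · rw [gvec_zero, gvec_succ] at h
    have h2 := congrFun h c'
    rw [Pi.single_apply, if_pos rfl] at h2
    norm_num at h2
  · rw [gvec_zero, gvec_succ] at h
    have h2 := congrFun h c
    rw [Pi.single_apply, if_pos rfl] at h2
    norm_num at h2
  · rw [gvec_succ, gvec_succ] at h
    rw [single_injective' h]

lemma fvec_eq_eps_iff {d k : ℕ} {j : Fin (k+1)} {i : Fin k} :
    (fvec j : Vdk d k) = (((0 : Fin d → ℝ), Pi.single i 1) : Vdk d k) ↔ j = i.succ := by
  constructor
  · intro h
    have h2 : (gvec j : Fin k → ℝ) = Pi.single i 1 := congrArg Prod.snd h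
    exact gvec_inj (by rw [h2, gvec_succ])
  · rintro rfl
    show ((0 : Fin d → ℝ), gvec i.succ) = _
    rw [gvec_succ]

lemma ncard_ne_succ (k : ℕ) :
    ({q : Fin k × Fin (k+1) | q.2 ≠ q.1.succ}).ncard = k ^ 2 := by
  classical
  rw [← Nat.card_coe_set_eq]
  have e0 : Nat.card ({q : Fin k × Fin (k+1) | q.2 ≠ q.1.succ} : Set _)
      = Fintype.card {q : Fin k × Fin (k+1) // ¬ q.2 = q.1.succ} :=
    Nat.card_eq_fintype_card
  rw [e0, Fintype.card_subtype_compl]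
  have e : {q : Fin k × Fin (k+1) // q.2 = q.1.succ} ≃ Fin k :=
    { toFun := fun q => q.1.1
      invFun := fun i => ⟨(i, i.succ), rfl⟩
      left_inv := fun q => by
        obtain ⟨⟨a, b⟩, hb⟩ := q
        exact Subtype.ext (Prod.ext rfl hb.symm)
      right_inv := fun i => rfl }
  rw [Fintype.card_congr e, Fintype.card_fin, Fintype.card_prod, Fintype.card_fin,
    Fintype.card_fin]
  have : k * (k + 1) = k ^ 2 + k := by ring
  omega

lemma convex_sub_preimage {E : Type*} [AddCommGroup E] [Module ℝ E] {C : Set E}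
    (hC : Convex ℝ C) (c : E) : Convex ℝ ((fun y => y - c) ⁻¹' C) := by
  intro x hx y hy a b ha hb hab
  show a • x + b • y - c ∈ C
  have h1 : a • (x - c) + b • (y - c) = a • x + b • y - c := by
    rw [smul_sub, smul_sub, sub_add_sub_comm, ← add_smul, hab, one_smul]
  rw [← h1]
  exact hC hx hy ha hb hab

lemma isLatticePt_cast_sub {k : ℕ} {x y : Fin k → ℝ} (hx : IsLatticePt x)
    (hy : IsLatticePt y) : IsLatticePt (x - y) := hx.sub' hy


/-- the lattice points of `∇̂₀` are
`{n − Σᵢ₌₁ᵏ min⟨Δᵢ,n⟩eᵢ* : n ∈ Δ* ∩ ℤ^d} ∪ {e₁*, …, e_k*}`, so `l(∇̂₀) = l(Δ*) + k`;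
moreover `l(∇̂₀ ⊎ ⋯ ⊎ ∇̂_k) = (k+1)l(Δ*) + k²`. -/
theorem lattice_points_hatNabla {d k : ℕ}
    (Δ : Fin (k+1) → Set (Fin d → ℝ))
    (hlat : ∀ i, IsLatticePolytope (Δ i))
    (hrefl : IsReflexive (∑ i, Δ i))
    -- ∇̂₀ = Conv({u − Σᵢ₌₁ᵏ min⟨Δᵢ,u⟩eᵢ* : u ∈ Δ*} ∪ {e₁*, …, e_k*})
    (Q : Set (Vdk d k))
    (hQ : Q = convexHull ℝ
        ((fun u => ((u, fun i : Fin k => -(minPair (Δ i.succ) u)) : Vdk d k)) ''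
            polarDual (∑ i, Δ i) ∪
          ⋃ i : Fin k, {(((0 : Fin d → ℝ), Pi.single i 1) : Vdk d k)}))
    -- ∇̂ᵢ = ∇̂₀ − eᵢ* for i = 1, …, k
    (Nhat : Fin (k+1) → Set (Vdk d k))
    (hNhat : Nhat = Fin.cases Q
        (fun i => (fun y => y - (((0 : Fin d → ℝ), Pi.single i 1) : Vdk d k)) '' Q)) :
    -- L(∇̂₀) = {n − Σᵢ min⟨Δᵢ,n⟩eᵢ* : n ∈ Δ* ∩ ℤ^d} ∪ {e₁*, …, e_k*}
    ({x ∈ Q | IsLatticePtV x} =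
      (fun u => ((u, fun i : Fin k => -(minPair (Δ i.succ) u)) : Vdk d k)) ''
          {n ∈ polarDual (∑ i, Δ i) | IsLatticePt n} ∪
        ⋃ i : Fin k, {(((0 : Fin d → ℝ), Pi.single i 1) : Vdk d k)}) ∧
    -- l(∇̂₀) = l(Δ*) + k
    {x ∈ Q | IsLatticePtV x}.ncard =
      {n ∈ polarDual (∑ i, Δ i) | IsLatticePt n}.ncard + k ∧
    -- l(∇̂₀ ⊎ ⋯ ⊎ ∇̂_k) = (k+1)·l(Δ*) + k²
    {x ∈ convexHull ℝ (⋃ i, Nhat i) | IsLatticePtV x}.ncard =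
      (k + 1) * {n ∈ polarDual (∑ i, Δ i) | IsLatticePt n}.ncard + k ^ 2 := by
  classical
  obtain ⟨hDlat, hD0, hDduallat⟩ := hrefl
  have hne : ∀ i, (Δ i).Nonempty :=
    fun i => nonempty_of_mem_sum (interior_subset hD0) i (Finset.mem_univ i)
  have hψlat : ∀ {n : Fin d → ℝ}, IsLatticePt n →
      IsLatticePt (fun i : Fin k => -(minPair (Δ i.succ) n)) := by
    intro n hn i
    obtain ⟨z, hz⟩ := minPair_int (hlat i.succ) (hne i.succ) hn
    exact ⟨-z, by show -(minPair (Δ i.succ) n) = _; rw [hz]; push_cast; ring⟩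
  have hQC : Q ⊆ Cone Δ := by
    rw [hQ]
    refine convexHull_min ?_ (convex_Cone hlat hne)
    rintro x (⟨u, hu, rfl⟩ | hx)
    · exact F_mem_Cone hlat hne hu
    · simp only [Set.mem_iUnion, Set.mem_singleton_iff] at hx
      obtain ⟨i, rfl⟩ := hx
      exact eps_mem_Cone hlat hne i
  -- part 1
  have hpart1 : {x ∈ Q | IsLatticePtV x} =
      (fun u => ((u, fun i : Fin k => -(minPair (Δ i.succ) u)) : Vdk d k)) ''
          {n ∈ polarDual (∑ i, Δ i) | IsLatticePt n} ∪
        ⋃ i : Fin k, {(((0 : Fin d → ℝ), Pi.single i 1) : Vdk d k)} := by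
    ext x
    constructor
    · rintro ⟨hxQ, hxl⟩
      rcases extract_Cone hlat hne hDlat hD0 (hQC hxQ) hxl with ⟨n, hn, heq⟩ | ⟨i, rfl⟩
      · exact Set.mem_union_left _ ⟨n, hn, heq⟩
      · exact Set.mem_union_right _ (Set.mem_iUnion.2 ⟨i, rfl⟩)
    · rintro (⟨n, ⟨hn1, hn2⟩, rfl⟩ | hx)
      · refine ⟨?_, hn2, hψlat hn2⟩
        rw [hQ]
        exact subset_convexHull ℝ _ (Set.mem_union_left _ ⟨n, hn1, rfl⟩)
      · rw [Set.mem_iUnion] at hx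
        obtain ⟨i, hxi⟩ := hx
        rw [Set.mem_singleton_iff] at hxi
        subst hxi
        refine ⟨?_, isLatticePt_zero, isLatticePt_single i⟩
        rw [hQ]
        exact subset_convexHull ℝ _ (Set.mem_union_right _ (Set.mem_iUnion.2 ⟨i, rfl⟩))
  have hLfin : {n ∈ polarDual (∑ i, Δ i) | IsLatticePt n}.Finite := lattice_finite hDduallat
  -- part 2
  have hFinj : Function.Injective
      (fun u : Fin d → ℝ => ((u, fun i : Fin k => -(minPair (Δ i.succ) u)) : Vdk d k)) :=
    fun u v huv => congrArg Prod.fst huv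
  have hεinj : Function.Injective
      (fun i : Fin k => (((0 : Fin d → ℝ), Pi.single i 1) : Vdk d k)) :=
    fun i j hij => single_injective' (congrArg Prod.snd hij)
  have hpart2 : {x ∈ Q | IsLatticePtV x}.ncard =
      {n ∈ polarDual (∑ i, Δ i) | IsLatticePt n}.ncard + k := by
    rw [hpart1, Set.iUnion_singleton_eq_range]
    rw [Set.ncard_union_eq ?disj (hLfin.image _) (Set.finite_range _)]
    case disj =>
      rw [Set.disjoint_left]
      rintro x ⟨n, ⟨hn1, hn2⟩, rfl⟩ hx2
      obtain ⟨i, hi⟩ := Set.mem_range.1 hx2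
      have h1 : (0 : Fin d → ℝ) = n := congrArg Prod.fst hi
      have h2 : (Pi.single i 1 : Fin k → ℝ) i = -(minPair (Δ i.succ) n) :=
        congrFun (congrArg Prod.snd hi) i
      rw [← h1, minPair_zero_right (hlat i.succ) (hne i.succ), neg_zero,
        Pi.single_apply, if_pos rfl] at h2
      norm_num at h2
    rw [Set.ncard_image_of_injective _ hFinj, ← Set.image_univ,
      Set.ncard_image_of_injective _ hεinj, Set.ncard_univ, Nat.card_eq_fintype_card,
      Fintype.card_fin]
  refine ⟨hpart1, hpart2, ?_⟩
  -- part 3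
  have hQsubC3 : ∀ j0 : Fin (k+1), Q ⊆ (fun y => y - fvec j0) ⁻¹' Cthree Δ := by
    intro j0
    rw [hQ]
    refine convexHull_min ?_ (convex_sub_preimage (convex_Cthree hlat hne) _)
    rintro x (⟨u, hu, rfl⟩ | hx)
    · exact F_sub_mem_Cthree hlat hne hu j0
    · simp only [Set.mem_iUnion, Set.mem_singleton_iff] at hx
      obtain ⟨i, rfl⟩ := hx
      exact eps_sub_mem_Cthree hlat hne i j0
  have hfv0 : (fvec 0 : Vdk d k) = 0 := by
    show ((0 : Fin d → ℝ), gvec 0) = 0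
    rw [gvec_zero]
    rfl
  have hfvsucc : ∀ c : Fin k, (fvec c.succ : Vdk d k) = ((0 : Fin d → ℝ), Pi.single c 1) := by
    intro c
    show ((0 : Fin d → ℝ), gvec c.succ) = _
    rw [gvec_succ]
  have hNsub : ∀ j : Fin (k+1), Nhat j ⊆ Cthree Δ := by
    intro j
    induction j using Fin.cases with
    | zero =>
        rw [hNhat]
        intro x hx
        simp only [Fin.cases_zero] at hx
        have h := hQsubC3 0 hx
        rw [Set.mem_preimage, hfv0, sub_zero] at h
        exact h
    | succ c =>
        rw [hNhat]
        intro x hx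
        simp only [Fin.cases_succ] at hx
        obtain ⟨y, hy, rfl⟩ := hx
        have h := hQsubC3 c.succ hy
        rw [Set.mem_preimage, hfvsucc c] at h
        exact h
  have hRC : convexHull ℝ (⋃ i, Nhat i) ⊆ Cthree Δ :=
    convexHull_min (Set.iUnion_subset hNsub) (convex_Cthree hlat hne)
  have hmemN : ∀ (j : Fin (k+1)) (y : Vdk d k), y ∈ Q →
      y - fvec j ∈ convexHull ℝ (⋃ i, Nhat i) := by
    intro j y hy
    refine subset_convexHull ℝ _ (Set.mem_iUnion.2 ⟨j, ?_⟩)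
    induction j using Fin.cases with
    | zero =>
        rw [hNhat]
        simp only [Fin.cases_zero]
        rw [hfv0, sub_zero]
        exact hy
    | succ c =>
        rw [hNhat]
        simp only [Fin.cases_succ]
        rw [hfvsucc c]
        exact ⟨y, hy, rfl⟩
  have hεQ : ∀ i : Fin k, (((0 : Fin d → ℝ), Pi.single i 1) : Vdk d k) ∈ Q := by
    intro i
    rw [hQ]
    exact subset_convexHull ℝ _ (Set.mem_union_right _ (Set.mem_iUnion.2 ⟨i, rfl⟩))
  have hFQ : ∀ n : Fin d → ℝ, n ∈ polarDual (∑ i, Δ i) →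
      ((n, fun i : Fin k => -(minPair (Δ i.succ) n)) : Vdk d k) ∈ Q := by
    intro n hn
    rw [hQ]
    exact subset_convexHull ℝ _ (Set.mem_union_left _ ⟨n, hn, rfl⟩)
  have hpart3set : {x ∈ convexHull ℝ (⋃ i, Nhat i) | IsLatticePtV x} =
      (fun q : Fin (k+1) × (Fin d → ℝ) =>
          ((q.2, fun i : Fin k => -(minPair (Δ i.succ) q.2)) : Vdk d k) - fvec q.1) ''
        ((Set.univ : Set (Fin (k+1))) ×ˢ {n ∈ polarDual (∑ i, Δ i) | IsLatticePt n}) ∪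
      (fun q : Fin k × Fin (k+1) =>
          (((0 : Fin d → ℝ), Pi.single q.1 1) : Vdk d k) - fvec q.2) ''
        {q : Fin k × Fin (k+1) | q.2 ≠ q.1.succ} := by
    ext x
    constructor
    · rintro ⟨hxR, hxl⟩
      rcases extract_Cthree hlat hne hDlat hD0 (hRC hxR) hxl with
        ⟨n, hn, j, heq⟩ | ⟨i, j, hij, heq⟩
      · exact Set.mem_union_left _ ⟨(j, n), ⟨Set.mem_univ _, hn⟩, heq⟩
      · exact Set.mem_union_right _ ⟨(i, j), hij, heq⟩
    · rintro (⟨⟨j, n⟩, ⟨-, hn1, hn2⟩, rfl⟩ | ⟨⟨i, j⟩, hij, rfl⟩)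
      · refine ⟨hmemN j _ (hFQ n hn1), ?_, ?_⟩
        · exact hn2.sub' isLatticePt_zero
        · exact (hψlat hn2).sub' (isLatticePt_gvec j)
      · refine ⟨hmemN j _ (hεQ i), ?_, ?_⟩
        · exact isLatticePt_zero.sub' isLatticePt_zero
        · exact (isLatticePt_single i).sub' (isLatticePt_gvec j)
  have hG1 : Function.Injective (fun q : Fin (k+1) × (Fin d → ℝ) =>
      ((q.2, fun i : Fin k => -(minPair (Δ i.succ) q.2)) : Vdk d k) - fvec q.1) := by
    rintro ⟨j, n⟩ ⟨j', n'⟩ h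
    have h1 : n - 0 = n' - 0 := congrArg Prod.fst h
    rw [sub_zero, sub_zero] at h1
    subst h1
    have h2 : (fun i : Fin k => -(minPair (Δ i.succ) n)) - gvec j
        = (fun i : Fin k => -(minPair (Δ i.succ) n)) - gvec j' := congrArg Prod.snd h
    have h3 : (gvec j : Fin k → ℝ) = gvec j' := by
      funext i
      have h4 := congrFun h2 i
      simp only [Pi.sub_apply] at h4
      linarith
    rw [gvec_inj h3]
  have hG2 : Set.InjOn (fun q : Fin k × Fin (k+1) =>
      (((0 : Fin d → ℝ), Pi.single q.1 1) : Vdk d k) - fvec q.2)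
      {q : Fin k × Fin (k+1) | q.2 ≠ q.1.succ} := by
    rintro ⟨i, j⟩ hij ⟨i', j'⟩ hij' h
    simp only [Set.mem_setOf_eq] at hij hij'
    have h2 : (Pi.single i 1 : Fin k → ℝ) - gvec j = Pi.single i' 1 - gvec j' :=
      congrArg Prod.snd h
    rcases Fin.eq_zero_or_eq_succ j with rfl | ⟨c, rfl⟩ <;>
      rcases Fin.eq_zero_or_eq_succ j' with rfl | ⟨c', rfl⟩
    · rw [gvec_zero, sub_zero, sub_zero] at h2
      rw [single_injective' h2]
    · exfalso
      rw [gvec_zero, sub_zero, gvec_succ] at h2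
      have hc' : c' ≠ i' := fun hEq => hij' (by rw [hEq])
      have h4 := congrFun h2 c'
      simp only [Pi.sub_apply] at h4
      rw [Pi.single_apply, Pi.single_apply, Pi.single_apply, if_neg hc', if_pos rfl] at h4
      split_ifs at h4 <;> norm_num at h4
    · exfalso
      rw [gvec_zero, sub_zero, gvec_succ] at h2
      have hc : c ≠ i := fun hEq => hij (by rw [hEq])
      have h4 := congrFun h2 c
      simp only [Pi.sub_apply] at h4
      rw [Pi.single_apply, Pi.single_apply, Pi.single_apply, if_neg hc, if_pos rfl] at h4
      split_ifs at h4 <;> norm_num at h4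
    · rw [gvec_succ, gvec_succ] at h2
      have hc : c ≠ i := fun hEq => hij (by rw [hEq])
      have hc' : c' ≠ i' := fun hEq => hij' (by rw [hEq])
      have h5 : i = i' := by
        by_contra hii
        have h4 := congrFun h2 i
        simp only [Pi.sub_apply] at h4
        have hic : ¬ i = c := fun hEq => hc (hEq.symm)
        rw [Pi.single_apply, Pi.single_apply, Pi.single_apply, Pi.single_apply,
          if_pos rfl, if_neg hic, if_neg hii] at h4
        split_ifs at h4 <;> norm_num at h4
      subst h5
      have h6 : (Pi.single c 1 : Fin k → ℝ) = Pi.single c' 1 := by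
        funext l
        have h7 := congrFun h2 l
        simp only [Pi.sub_apply] at h7
        linarith
      rw [single_injective' h6]
  have hψ0 : (fun i : Fin k => -(minPair (Δ i.succ) (0 : Fin d → ℝ))) = (0 : Fin k → ℝ) := by
    funext i
    rw [minPair_zero_right (hlat i.succ) (hne i.succ), neg_zero]
    rfl
  have hdisj3 : Disjoint
      ((fun q : Fin (k+1) × (Fin d → ℝ) =>
          ((q.2, fun i : Fin k => -(minPair (Δ i.succ) q.2)) : Vdk d k) - fvec q.1) ''
        ((Set.univ : Set (Fin (k+1))) ×ˢ {n ∈ polarDual (∑ i, Δ i) | IsLatticePt n}))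
      ((fun q : Fin k × Fin (k+1) =>
          (((0 : Fin d → ℝ), Pi.single q.1 1) : Vdk d k) - fvec q.2) ''
        {q : Fin k × Fin (k+1) | q.2 ≠ q.1.succ}) := by
    rw [Set.disjoint_left]
    rintro x ⟨⟨j, n⟩, ⟨-, hn1, hn2⟩, rfl⟩ ⟨⟨i, j'⟩, hij', hEq⟩
    simp only [Set.mem_setOf_eq] at hij'
    have h1 : (0 : Fin d → ℝ) - 0 = n - 0 := congrArg Prod.fst hEq
    rw [sub_zero, sub_zero] at h1
    subst h1
    have h2 : (Pi.single i 1 : Fin k → ℝ) - gvec j'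
        = (fun i : Fin k => -(minPair (Δ i.succ) (0 : Fin d → ℝ))) - gvec j :=
      congrArg Prod.snd hEq
    rw [hψ0] at h2
    have h4 := congrFun h2 i
    simp only [Pi.sub_apply, Pi.zero_apply] at h4
    rw [Pi.single_apply, if_pos rfl] at h4
    have hb1 := gvec_le_one j' i
    have hb2 := gvec_nonneg j' i
    have hb3 := gvec_nonneg j i
    have hb4 := gvec_le_one j i
    have h5 : gvec j' i = 1 := by linarith
    rcases Fin.eq_zero_or_eq_succ j' with rfl | ⟨c', rfl⟩
    · rw [gvec_zero] at h5
      norm_num at h5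
    · rw [gvec_succ] at h5
      have h6 : i = c' := by
        by_contra hic
        rw [Pi.single_apply, if_neg hic] at h5
        norm_num at h5
      exact hij' (by rw [h6])
  rw [hpart3set, Set.ncard_union_eq hdisj3
      ((Set.finite_univ.prod hLfin).image _) ((Set.toFinite _).image _),
    Set.ncard_image_of_injective _ hG1, Set.ncard_image_of_injOn hG2,
    ncard_prod', Set.ncard_univ, Nat.card_eq_fintype_card, Fintype.card_fin,
    ncard_ne_succ]
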